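/- Let p ≥ 1 and q ≥ 0 be natural numbers, and let v : Fin (p+q) → ℝ satisfy Q_{p,q}(v) = 1. Then the stabilizer subgroup of v in the group of linear automorphisms of Fin (p+q) → ℝ preserving Q_{p,q} is isomorphic, as a group, to the group of linear automorphisms of Fin ((p−1)+q) → ℝ preserving Q_{p−1,q}. -/

import Mathlib

/-- The standard quadratic form of signature `(p, q)` on `Fin (p+q) → ℝ`:
`Q_{p,q}(v) = ∑_{i < p} (v i)^2 − ∑_{i ≥ p} (v i)^2`. -/
def Qpq (p q : ℕ) (v : Fin (p + q) → ℝ) : ℝ :=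
  (∑ i ∈ Finset.univ.filter (fun i : Fin (p + q) => (i : ℕ) < p), v i ^ 2) -
    ∑ i ∈ Finset.univ.filter (fun i : Fin (p + q) => p ≤ (i : ℕ)), v i ^ 2

/-- The indefinite orthogonal group `O(p,q)`: linear automorphisms of `Fin (p+q) → ℝ`
preserving the quadratic form `Q_{p,q}`. -/
noncomputable def OpqGroup (p q : ℕ) : Subgroup ((Fin (p + q) → ℝ) ≃ₗ[ℝ] (Fin (p + q) → ℝ)) where
  carrier := {T | ∀ x, Qpq p q (T x) = Qpq p q x}
  one_mem' := fun _ => rfl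
  mul_mem' := by
    intro T S hT hS x
    show Qpq p q (T (S x)) = Qpq p q x
    rw [hT, hS]
  inv_mem' := by
    intro T hT x
    have h := hT (T⁻¹ x)
    rw [show T ((T⁻¹ : (Fin (p + q) → ℝ) ≃ₗ[ℝ] (Fin (p + q) → ℝ)) x) = x from
      T.apply_symm_apply x] at h
    exact h.symm

/-- The stabilizer subgroup of a vector `v` inside `O(p,q)`. -/
noncomputable def OpqStabilizer (p q : ℕ) (v : Fin (p + q) → ℝ) : Subgroup (OpqGroup p q) where
  carrier := {T | (T : (Fin (p + q) → ℝ) ≃ₗ[ℝ] (Fin (p + q) → ℝ)) v = v}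
  one_mem' := rfl
  mul_mem' := by
    intro T S hT hS
    show ((T * S : OpqGroup p q) : (Fin (p + q) → ℝ) ≃ₗ[ℝ] (Fin (p + q) → ℝ)) v = v
    show ((T : (Fin (p + q) → ℝ) ≃ₗ[ℝ] _) ((S : (Fin (p + q) → ℝ) ≃ₗ[ℝ] _) v)) = v
    rw [show ((S : (Fin (p + q) → ℝ) ≃ₗ[ℝ] _)) v = v from hS,
      show ((T : (Fin (p + q) → ℝ) ≃ₗ[ℝ] _)) v = v from hT]
  inv_mem' := by
    intro T hT
    show ((T : OpqGroup p q) : (Fin (p + q) → ℝ) ≃ₗ[ℝ] _).symm v = v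
    rw [LinearEquiv.symm_apply_eq]
    exact (show ((T : OpqGroup p q) : (Fin (p + q) → ℝ) ≃ₗ[ℝ] _) v = v from hT).symm

open Finset

/-- sign pattern -/
def sgnP (p : ℕ) {n : ℕ} (i : Fin n) : ℝ := if (i : ℕ) < p then 1 else -1

lemma sgnP_cases (p : ℕ) {n : ℕ} (i : Fin n) : sgnP p i = 1 ∨ sgnP p i = -1 := by
  unfold sgnP; split <;> simp

lemma sgnP_ne_zero (p : ℕ) {n : ℕ} (i : Fin n) : sgnP p i ≠ 0 := by
  rcases sgnP_cases p i with h | h <;> rw [h] <;> norm_num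

lemma Qpq_eq (p q : ℕ) (x : Fin (p + q) → ℝ) :
    Qpq p q x = ∑ i, sgnP p i * x i ^ 2 := by
  unfold Qpq
  rw [← Finset.sum_filter_add_sum_filter_not Finset.univ
    (fun i : Fin (p + q) => (i : ℕ) < p) (fun i => sgnP p i * x i ^ 2)]
  have h1 : ∑ i ∈ Finset.univ.filter (fun i : Fin (p + q) => (i : ℕ) < p),
      sgnP p i * x i ^ 2 = ∑ i ∈ Finset.univ.filter (fun i : Fin (p + q) => (i : ℕ) < p),
      x i ^ 2 := by
    refine Finset.sum_congr rfl fun i hi => ?_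
    rw [Finset.mem_filter] at hi
    rw [sgnP, if_pos hi.2, one_mul]
  have h2 : ∑ i ∈ Finset.univ.filter (fun i : Fin (p + q) => ¬ (i : ℕ) < p),
      sgnP p i * x i ^ 2 = -∑ i ∈ Finset.univ.filter (fun i : Fin (p + q) => p ≤ (i : ℕ)),
      x i ^ 2 := by
    rw [← Finset.sum_neg_distrib]
    refine Finset.sum_congr (by simp [not_lt]) fun i hi => ?_
    rw [Finset.mem_filter] at hi
    rw [sgnP, if_neg (not_lt.2 hi.2)]; ring
  rw [h1, h2]; ring

lemma sum_sq_expand {n : ℕ} (c x y : Fin n → ℝ) :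
    ∑ i, c i * (x i + y i) ^ 2
      = ∑ i, c i * x i ^ 2 + 2 * ∑ i, c i * x i * y i + ∑ i, c i * y i ^ 2 := by
  rw [Finset.mul_sum, ← Finset.sum_add_distrib, ← Finset.sum_add_distrib]
  exact Finset.sum_congr rfl fun i _ => by ring

/-- The linear functional `x ↦ B(v, x)` for the bilinear form of `Q_{p,q}`. -/
def BvL (p q : ℕ) (v : Fin (p + q) → ℝ) : (Fin (p + q) → ℝ) →ₗ[ℝ] ℝ where
  toFun x := ∑ i, sgnP p i * v i * x i
  map_add' a b := by simp [mul_add, Finset.sum_add_distrib]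
  map_smul' r a := by
    simp only [smul_eq_mul, RingHom.id_apply, Finset.mul_sum, Pi.smul_apply]
    exact Finset.sum_congr rfl fun i _ => by ring

@[simp] lemma BvL_apply (p q : ℕ) (v x : Fin (p + q) → ℝ) :
    BvL p q v x = ∑ i, sgnP p i * v i * x i := rfl

lemma BvL_symm (p q : ℕ) (v x : Fin (p + q) → ℝ) : BvL p q v x = BvL p q x v := by
  simp only [BvL_apply]; exact Finset.sum_congr rfl fun i _ => by ring

lemma BvL_self (p q : ℕ) (v : Fin (p + q) → ℝ) (hv : Qpq p q v = 1) :
    BvL p q v v = 1 := by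
  rw [BvL_apply, ← hv, Qpq_eq]
  exact Finset.sum_congr rfl fun i _ => by ring

lemma Qpq_smul_add (p q : ℕ) (v : Fin (p + q) → ℝ) (hv : Qpq p q v = 1)
    (a : ℝ) (w : Fin (p + q) → ℝ) (hw : BvL p q v w = 0) :
    Qpq p q (a • v + w) = a ^ 2 + Qpq p q w := by
  rw [Qpq_eq, Qpq_eq]
  have h : ∀ i, (a • v + w) i = a * v i + w i := fun i => rfl
  simp only [h]
  rw [sum_sq_expand (sgnP p) (fun i => a * v i) w]
  have h1 : ∑ i, sgnP p i * (a * v i) ^ 2 = a ^ 2 * ∑ i, sgnP p i * v i ^ 2 := by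
    rw [Finset.mul_sum]; exact Finset.sum_congr rfl fun i _ => by ring
  have h2 : ∑ i, sgnP p i * (a * v i) * w i = a * ∑ i, sgnP p i * v i * w i := by
    rw [Finset.mul_sum]; exact Finset.sum_congr rfl fun i _ => by ring
  rw [h1, h2, ← Qpq_eq, hv, ← BvL_apply, hw]
  ring

lemma Qpq_decomp (p q : ℕ) (v : Fin (p + q) → ℝ) (hv : Qpq p q v = 1)
    (x : Fin (p + q) → ℝ) :
    Qpq p q x = (BvL p q v x) ^ 2 + Qpq p q (x - BvL p q v x • v) := by
  have hw : BvL p q v (x - BvL p q v x • v) = 0 := by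
    rw [map_sub, map_smul, smul_eq_mul, BvL_self p q v hv, mul_one, sub_self]
  have := Qpq_smul_add p q v hv (BvL p q v x) (x - BvL p q v x • v) hw
  rw [← this]; congr 1; abel

/-- Invariance of the bilinear form under maps preserving `Q`. -/
lemma B_invariant (p q : ℕ) (L : (Fin (p + q) → ℝ) →ₗ[ℝ] (Fin (p + q) → ℝ))
    (hL : ∀ x, Qpq p q (L x) = Qpq p q x) (x y : Fin (p + q) → ℝ) :
    BvL p q (L x) (L y) = BvL p q x y := by
  have h := hL (x + y)
  rw [map_add] at h
  have e1 : Qpq p q (L x + L y) = Qpq p q (L x) + 2 * BvL p q (L x) (L y) + Qpq p q (L y) := by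
    rw [Qpq_eq, Qpq_eq, Qpq_eq, BvL_apply]
    have : ∀ i, (L x + L y) i = L x i + L y i := fun i => rfl
    simp only [this]
    rw [sum_sq_expand]
  have e2 : Qpq p q (x + y) = Qpq p q x + 2 * BvL p q x y + Qpq p q y := by
    rw [Qpq_eq, Qpq_eq, Qpq_eq, BvL_apply]
    have : ∀ i, (x + y) i = x i + y i := fun i => rfl
    simp only [this]
    rw [sum_sq_expand]
  have hx := hL x; have hy := hL y
  rw [e1, e2, hx, hy] at h
  linarith

/-- Sylvester inertia: one-sided inequality. -/
lemma inertia_le {n : ℕ} (c d : Fin n → ℝ)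
    (hc : ∀ i, c i = 1 ∨ c i = -1) (hd : ∀ i, d i = 1 ∨ d i = -1)
    (f : (Fin n → ℝ) ≃ₗ[ℝ] (Fin n → ℝ))
    (hf : ∀ x, ∑ i, c i * f x i ^ 2 = ∑ i, d i * x i ^ 2) :
    (Finset.univ.filter fun i => d i = 1).card ≤ (Finset.univ.filter fun i => c i = 1).card := by
  classical
  by_contra hcon
  push_neg at hcon
  set S := Finset.univ.filter fun i : Fin n => d i = 1 with hS
  set T := Finset.univ.filter fun i : Fin n => c i = 1 with hT
  let ext : (↥S → ℝ) →ₗ[ℝ] (Fin n → ℝ) :=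
    { toFun := fun y i => if h : i ∈ S then y ⟨i, h⟩ else 0
      map_add' := by intro a b; funext i; by_cases h : i ∈ S <;> simp [h]
      map_smul' := by intro r a; funext i; by_cases h : i ∈ S <;> simp [h] }
  let res : (Fin n → ℝ) →ₗ[ℝ] (↥T → ℝ) :=
    { toFun := fun x j => x j
      map_add' := by intros; rfl
      map_smul' := by intros; rfl }
  let φ : (↥S → ℝ) →ₗ[ℝ] (↥T → ℝ) := res ∘ₗ f.toLinearMap ∘ₗ ext
  have hker : LinearMap.ker φ ≠ ⊥ := by
    apply LinearMap.ker_ne_bot_of_finrank_lt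
    simp only [Module.finrank_pi, Fintype.card_coe]
    exact hcon
  obtain ⟨y, hyker, hy0⟩ := (Submodule.ne_bot_iff _).1 hker
  rw [LinearMap.mem_ker] at hyker
  set x := ext y with hx
  have hxout : ∀ i, i ∉ S → x i = 0 := by
    intro i hi
    simp only [hx, ext, LinearMap.coe_mk, AddHom.coe_mk, dif_neg hi]
  have hxin : ∀ (i : ↥S), x i.1 = y i := by
    intro i
    simp only [hx, ext, LinearMap.coe_mk, AddHom.coe_mk, dif_pos i.2]
  have hfx : ∀ i ∈ T, f x i = 0 := by
    intro i hi
    have := congrFun hyker (⟨i, hi⟩ : ↥T)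
    simpa [φ, res] using this
  -- RHS positive
  have hpos : 0 < ∑ i, d i * x i ^ 2 := by
    rw [← Finset.sum_filter_add_sum_filter_not Finset.univ (fun i : Fin n => d i = 1)]
    have hz : ∑ i ∈ Finset.univ.filter (fun i : Fin n => ¬ d i = 1), d i * x i ^ 2 = 0 := by
      refine Finset.sum_eq_zero fun i hi => ?_
      rw [Finset.mem_filter] at hi
      have : i ∉ S := by simp [hS, hi.2]
      rw [hxout i this]; ring
    rw [hz, add_zero]
    obtain ⟨j, hj⟩ : ∃ j : ↥S, y j ≠ 0 := by
      by_contra hall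
      push_neg at hall
      exact hy0 (funext fun j => hall j)
    refine Finset.sum_pos' (fun i hi => ?_) ⟨j.1, by simpa [hS] using j.2, ?_⟩
    · rw [Finset.mem_filter] at hi
      rw [hi.2, one_mul]; positivity
    · have hj1 : d j.1 = 1 := by
        have h2 := j.2
        simp only [S, Finset.mem_filter] at h2
        exact h2.2
      rw [hj1, one_mul, hxin j]
      positivity
  -- LHS nonpositive
  have hneg : ∑ i, c i * f x i ^ 2 ≤ 0 := by
    rw [← Finset.sum_filter_add_sum_filter_not Finset.univ (fun i : Fin n => c i = 1)]
    have hz : ∑ i ∈ Finset.univ.filter (fun i : Fin n => c i = 1), c i * f x i ^ 2 = 0 := by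
      refine Finset.sum_eq_zero fun i hi => ?_
      rw [Finset.mem_filter] at hi
      rw [hfx i (by simp [hT, hi.2]), ]
      ring
    rw [hz, zero_add]
    refine Finset.sum_nonpos fun i => ?_
    intro hi
    rw [Finset.mem_filter] at hi
    rcases hc i with h1 | h1
    · exact absurd h1 hi.2
    · rw [h1]; nlinarith [sq_nonneg (f x i)]
  rw [hf x] at hneg
  linarith

/-- Sylvester inertia: equality of positive index. -/
lemma inertia_eq {n : ℕ} (c d : Fin n → ℝ)
    (hc : ∀ i, c i = 1 ∨ c i = -1) (hd : ∀ i, d i = 1 ∨ d i = -1)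
    (f : (Fin n → ℝ) ≃ₗ[ℝ] (Fin n → ℝ))
    (hf : ∀ x, ∑ i, c i * f x i ^ 2 = ∑ i, d i * x i ^ 2) :
    (Finset.univ.filter fun i => c i = 1).card = (Finset.univ.filter fun i => d i = 1).card := by
  refine le_antisymm ?_ (inertia_le c d hc hd f hf)
  refine inertia_le d c hd hc f.symm fun y => ?_
  have := hf (f.symm y)
  rw [f.apply_symm_apply] at this
  exact this.symm

lemma card_filter_lt {n p : ℕ} (h : p ≤ n) :
    (Finset.univ.filter fun i : Fin n => (i : ℕ) < p).card = p := by
  rw [← Fintype.card_subtype]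
  refine (Fintype.card_congr
    (⟨fun j => (⟨j.1.1, j.2⟩ : Fin p),
      fun i => ⟨⟨i.1, lt_of_lt_of_le i.2 h⟩, i.2⟩,
      fun j => Subtype.ext (Fin.ext rfl), fun i => Fin.ext rfl⟩ :
      {i : Fin n // (i : ℕ) < p} ≃ Fin p)).trans (Fintype.card_fin p)

set_option maxHeartbeats 2000000 in
open QuadraticMap in
lemma exists_e (p q : ℕ) (hp : 1 ≤ p) (v : Fin (p + q) → ℝ) (hv : Qpq p q v = 1) :
    ∃ e : (Fin ((p - 1) + q) → ℝ) ≃ₗ[ℝ] ↥(LinearMap.ker (BvL p q v)),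
      ∀ x, Qpq p q ((e x : Fin (p + q) → ℝ)) = Qpq (p - 1) q x := by
  classical
  have hmn : (p - 1) + q + 1 = p + q := by omega
  have hle : (p - 1) + q ≤ p + q := by omega
  set W := LinearMap.ker (BvL p q v) with hW
  have hvv : BvL p q v v = 1 := BvL_self p q v hv
  have hmemW : ∀ x, x - BvL p q v x • v ∈ W := fun x => by
    rw [hW, LinearMap.mem_ker, _root_.map_sub, _root_.map_smul, smul_eq_mul, hvv, mul_one, sub_self]
  have hWz : ∀ z : ↥W, BvL p q v (z : Fin (p + q) → ℝ) = 0 := fun z => z.2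
  -- the restricted quadratic form
  set Q' : QuadraticForm ℝ ↥W :=
    (QuadraticMap.weightedSumSquares ℝ (fun i : Fin (p + q) => sgnP p i)).comp W.subtype
      with hQ'def
  have hQ' : ∀ z : ↥W, Q' z = ∑ i, sgnP p i * (z : Fin (p + q) → ℝ) i ^ 2 := by
    intro z
    simp only [hQ'def, QuadraticMap.comp_apply, QuadraticMap.weightedSumSquares_apply,
      Submodule.coe_subtype, smul_eq_mul]
    exact Finset.sum_congr rfl fun i _ => by ring
  have hpolar : ∀ z t : ↥W, QuadraticMap.polar (⇑Q') z t
      = 2 * ∑ i, sgnP p i * (z : Fin (p + q) → ℝ) i * (t : Fin (p + q) → ℝ) i := by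
    intro z t
    rw [QuadraticMap.polar, hQ', hQ', hQ']
    have hco : ∀ i, ((z + t : ↥W) : Fin (p + q) → ℝ) i
        = (z : Fin (p + q) → ℝ) i + (t : Fin (p + q) → ℝ) i := fun i => rfl
    simp only [hco]
    rw [sum_sq_expand]
    ring
  have hsep : (QuadraticMap.associated (R := ℝ) Q').SeparatingLeft := by
    intro z hz
    have hpz : ∀ t : ↥W, QuadraticMap.polar (⇑Q') z t = 0 := by
      intro t
      have h2 := QuadraticMap.two_nsmul_associated ℝ Q'
      have h3 := congrArg (fun B => B z t) h2
      simp only [LinearMap.smul_apply, QuadraticMap.polarBilin_apply_apply] at h3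
      rw [← h3]
      have h4 : ((QuadraticMap.associatedHom ℝ) Q' z) t = 0 := hz t
      rw [h4, smul_zero]
    -- from polar vanishing on W, the vector is B-orthogonal to W
    have hB0 : ∀ t : ↥W, BvL p q (z : Fin (p + q) → ℝ) (t : Fin (p + q) → ℝ) = 0 := by
      intro t
      have := hpz t
      rw [hpolar z t] at this
      rw [BvL_apply]
      linarith
    -- in fact B-orthogonal to everything
    have hall : ∀ x, BvL p q (z : Fin (p + q) → ℝ) x = 0 := by
      intro x
      have hx : x = BvL p q v x • v + (x - BvL p q v x • v) := by abel
      rw [hx, _root_.map_add, _root_.map_smul, smul_eq_mul]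
      have h5 : BvL p q (z : Fin (p + q) → ℝ) v = 0 := by
        rw [BvL_symm]; exact hWz z
      have h6 : BvL p q (z : Fin (p + q) → ℝ) (x - BvL p q v x • v) = 0 :=
        hB0 ⟨_, hmemW x⟩
      rw [h5, h6]; ring
    -- evaluate on basis vectors
    have hz0 : ∀ i, (z : Fin (p + q) → ℝ) i = 0 := by
      intro i
      have := hall (Pi.single i 1)
      rw [BvL_apply] at this
      have hsum : ∑ j, sgnP p j * (z : Fin (p + q) → ℝ) j * (Pi.single i (1:ℝ) : Fin (p + q) → ℝ) j
          = sgnP p i * (z : Fin (p + q) → ℝ) i := by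
        rw [Finset.sum_eq_single i]
        · simp
        · intro j _ hj
          rw [Pi.single_eq_of_ne hj, mul_zero]
        · intro h; exact absurd (Finset.mem_univ i) h
      rw [hsum] at this
      rcases sgnP_cases p i with h | h <;> rw [h] at this <;> linarith
    exact Subtype.ext (funext hz0)
  -- dimension of W
  have hfr : Module.finrank ℝ ↥W = (p - 1) + q := by
    have h1 := LinearMap.finrank_range_add_finrank_ker (BvL p q v)
    have hsurj : LinearMap.range (BvL p q v) = ⊤ := by
      rw [LinearMap.range_eq_top]
      intro r
      exact ⟨r • v, by rw [_root_.map_smul, smul_eq_mul, hvv, mul_one]⟩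
    rw [hsurj] at h1
    rw [finrank_top, Module.finrank_self, Module.finrank_pi, Fintype.card_fin] at h1
    rw [hW]
    omega
  obtain ⟨w, hw0, ⟨g⟩⟩ := QuadraticForm.equivalent_sign_ne_zero_weighted_sum_squared Q' hsep
  set ε : Fin (Module.finrank ℝ ↥W) ≃ Fin ((p - 1) + q) := finCongr hfr with hε
  set w' : Fin ((p - 1) + q) → ℝ := fun j => ((w (ε.symm j) : ℝ)) with hw'
  have hw'pm : ∀ j, w' j = 1 ∨ w' j = -1 := by
    intro j
    have hnz := hw0 (ε.symm j)
    cases h : w (ε.symm j)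
    · exact absurd h hnz
    · right; simp [hw', h]
    · left; simp [hw', h]
  set g' : ↥W ≃ₗ[ℝ] (Fin ((p - 1) + q) → ℝ) :=
    g.toLinearEquiv.trans (LinearEquiv.funCongrLeft ℝ ℝ ε.symm) with hg'def
  have hg'app : ∀ (z : ↥W) (j), g' z j = g.toLinearEquiv z (ε.symm j) := fun z j => rfl
  have hg' : ∀ z : ↥W, ∑ j, w' j * (g' z j) ^ 2
      = ∑ i, sgnP p i * (z : Fin (p + q) → ℝ) i ^ 2 := by
    intro z
    have h1 : ∑ j, w' j * (g' z j) ^ 2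
        = ∑ i, (w i : ℝ) * (g.toLinearEquiv z i) ^ 2 := by
      rw [← Equiv.sum_comp ε.symm (fun i => (w i : ℝ) * (g.toLinearEquiv z i) ^ 2)]
      rfl
    have h2 := g.map_app z
    rw [QuadraticMap.weightedSumSquares_apply] at h2
    rw [h1, ← hQ' z, ← h2]
    refine Finset.sum_congr rfl fun i _ => ?_
    simp only [smul_eq_mul]
    rw [show (g z i : ℝ) = g.toLinearEquiv z i from rfl]
    ring
  -- the ambient comparison automorphism
  set prW : (Fin (p + q) → ℝ) →ₗ[ℝ] ↥W :=
    (LinearMap.id - (BvL p q v).smulRight v).codRestrict W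
      (fun x => by simpa using hmemW x) with hprWdef
  have hprW : ∀ x, ((prW x : Fin (p + q) → ℝ)) = x - BvL p q v x • v := by
    intro x; rfl
  set G : (Fin (p + q) → ℝ) →ₗ[ℝ] (Fin ((p - 1) + q) → ℝ) :=
    g'.toLinearMap ∘ₗ prW with hGdef
  have hGapp : ∀ x, G x = g' (prW x) := fun x => rfl
  set lastIdx : Fin (p + q) := ⟨(p - 1) + q, by omega⟩ with hlastIdx
  set Flin : (Fin (p + q) → ℝ) →ₗ[ℝ] (Fin (p + q) → ℝ) :=
    { toFun := fun x i => if h : (i : ℕ) < (p - 1) + q then G x ⟨i, h⟩ else BvL p q v x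
      map_add' := by
        intro a b; funext i
        by_cases h : (i : ℕ) < (p - 1) + q <;>
          simp [h, _root_.map_add]
      map_smul' := by
        intro r a; funext i
        by_cases h : (i : ℕ) < (p - 1) + q <;>
          simp [h, _root_.map_smul] } with hFlindef
  have hFlin : ∀ x i, Flin x i
      = if h : (i : ℕ) < (p - 1) + q then G x ⟨i, h⟩ else BvL p q v x := fun x i => rfl
  set resM : (Fin (p + q) → ℝ) →ₗ[ℝ] (Fin ((p - 1) + q) → ℝ) :=
    { toFun := fun x j => x (Fin.castLE hle j)
      map_add' := by intros; rfl
      map_smul' := by intros; rfl } with hresMdef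
  set Glin : (Fin (p + q) → ℝ) →ₗ[ℝ] (Fin (p + q) → ℝ) :=
    W.subtype ∘ₗ g'.symm.toLinearMap ∘ₗ resM + (LinearMap.proj lastIdx).smulRight v
      with hGlindef
  have hGlin : ∀ x, Glin x = ((g'.symm (resM x) : Fin (p + q) → ℝ)) + x lastIdx • v :=
    fun x => rfl
  have hFG : ∀ x, Flin (Glin x) = x := by
    intro x
    have hBvGlin : BvL p q v (Glin x) = x lastIdx := by
      rw [hGlin, _root_.map_add, _root_.map_smul, smul_eq_mul, hvv,
        hWz (g'.symm (resM x)), mul_one, zero_add]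
    have hGGlin : G (Glin x) = resM x := by
      rw [hGapp]
      have hpr : prW (Glin x) = g'.symm (resM x) := by
        apply Subtype.ext
        rw [hprW, hBvGlin, hGlin]
        abel
      rw [hpr, LinearEquiv.apply_symm_apply]
    funext i
    rw [hFlin]
    by_cases h : (i : ℕ) < (p - 1) + q
    · rw [dif_pos h, hGGlin]
      rfl
    · rw [dif_neg h, hBvGlin]
      congr 1
      apply Fin.ext
      simp only [hlastIdx]
      omega
  have hGF : ∀ x, Glin (Flin x) = x := by
    intro x
    have hres : resM (Flin x) = G x := by
      funext j
      show Flin x (Fin.castLE hle j) = G x j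
      rw [hFlin, dif_pos (show ((Fin.castLE hle j : Fin (p + q)) : ℕ) < (p - 1) + q from j.2)]
      congr 1
    have hlast : Flin x lastIdx = BvL p q v x := by
      rw [hFlin, dif_neg (by simp [hlastIdx])]
    rw [hGlin, hres, hGapp, LinearEquiv.symm_apply_apply, hlast, hprW]
    abel
  set F : (Fin (p + q) → ℝ) ≃ₗ[ℝ] (Fin (p + q) → ℝ) :=
    LinearEquiv.ofLinear Flin Glin (LinearMap.ext hFG) (LinearMap.ext hGF) with hFdef
  set c'' : Fin (p + q) → ℝ :=
    fun i => if h : (i : ℕ) < (p - 1) + q then w' ⟨i, h⟩ else 1 with hc''def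
  have hc'' : ∀ i, c'' i = 1 ∨ c'' i = -1 := by
    intro i
    by_cases h : (i : ℕ) < (p - 1) + q
    · rw [hc''def]; simp only [dif_pos h]; exact hw'pm _
    · left; rw [hc''def]; simp only [dif_neg h]
  set ι : Fin ((p - 1) + q + 1) ≃ Fin (p + q) := finCongr hmn with hι
  have hιval : ∀ i' : Fin ((p - 1) + q + 1), ((ι i' : Fin (p + q)) : ℕ) = (i' : ℕ) :=
    fun i' => rfl
  have hF : ∀ x, ∑ i, c'' i * F x i ^ 2 = ∑ i, sgnP p i * x i ^ 2 := by
    intro x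
    have hFx : ∀ i, F x i = Flin x i := fun i => rfl
    rw [← Equiv.sum_comp ι (fun i => c'' i * F x i ^ 2), Fin.sum_univ_castSucc]
    have hterm : ∀ j : Fin ((p - 1) + q),
        c'' (ι j.castSucc) * F x (ι j.castSucc) ^ 2 = w' j * (G x j) ^ 2 := by
      intro j
      have hjlt : ((ι j.castSucc : Fin (p + q)) : ℕ) < (p - 1) + q := by
        rw [hιval]; simp [Fin.castSucc]
      rw [hFx, hFlin, hc''def]
      simp only [dif_pos hjlt]
      congr 2
    have hlastval : ¬ ((ι (Fin.last _) : Fin (p + q)) : ℕ) < (p - 1) + q := by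
      rw [hιval]; simp [Fin.last]
    have hterm2 : c'' (ι (Fin.last _)) * F x (ι (Fin.last _)) ^ 2 = BvL p q v x ^ 2 := by
      rw [hFx, hFlin, hc''def]
      simp only [dif_neg hlastval]
      ring
    rw [Finset.sum_congr rfl (fun j _ => hterm j), hterm2]
    have hdecomp := Qpq_decomp p q v hv x
    rw [Qpq_eq, Qpq_eq] at hdecomp
    have hGx : ∑ j, w' j * (G x j) ^ 2
        = ∑ i, sgnP p i * (x - BvL p q v x • v) i ^ 2 := by
      have := hg' (prW x)
      rw [hGapp]
      rw [this]
      refine Finset.sum_congr rfl fun i _ => by rw [hprW]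
    rw [hGx, hdecomp]
    ring
  have hcount := inertia_eq c'' (fun i : Fin (p + q) => sgnP p i) hc'' (sgnP_cases p) F hF
  -- count the positive entries
  have hposc : (Finset.univ.filter fun i : Fin (p + q) => sgnP p i = 1).card = p := by
    have hset : (Finset.univ.filter fun i : Fin (p + q) => sgnP p i = 1)
        = Finset.univ.filter fun i : Fin (p + q) => (i : ℕ) < p := by
      ext i
      simp only [Finset.mem_filter, Finset.mem_univ, true_and]
      by_cases h : (i : ℕ) < p <;> norm_num [sgnP, h]
    rw [hset, card_filter_lt (by omega)]
  set k := (Finset.univ.filter fun j : Fin ((p - 1) + q) => w' j = 1).card with hk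
  have hposc'' : (Finset.univ.filter fun i : Fin (p + q) => c'' i = 1).card = k + 1 := by
    rw [Finset.card_filter, ← Equiv.sum_comp ι (fun i => if c'' i = 1 then 1 else 0),
      Fin.sum_univ_castSucc]
    have hterm : ∀ j : Fin ((p - 1) + q),
        (if c'' (ι j.castSucc) = 1 then 1 else 0) = (if w' j = 1 then 1 else 0) := by
      intro j
      have hjlt : ((ι j.castSucc : Fin (p + q)) : ℕ) < (p - 1) + q := by
        rw [hιval]; simp [Fin.castSucc]
      have hcc : c'' (ι j.castSucc) = w' j := by
        rw [hc''def]; simp only [dif_pos hjlt]; congr 1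
      rw [hcc]
    have hlastval : ¬ ((ι (Fin.last _) : Fin (p + q)) : ℕ) < (p - 1) + q := by
      rw [hιval]; simp [Fin.last]
    have hterm2 : (if c'' (ι (Fin.last _)) = 1 then 1 else 0) = 1 := by
      rw [hc''def]; simp only [dif_neg hlastval]; simp
    rw [Finset.sum_congr rfl (fun j _ => hterm j), hterm2, hk, Finset.card_filter]
  have hkp : k = p - 1 := by
    rw [hposc, hposc''] at hcount
    omega
  -- match the sign patterns via a permutation
  have hkd : (Finset.univ.filter fun j : Fin ((p - 1) + q) => sgnP (p - 1) j = 1).card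
      = p - 1 := by
    have hset : (Finset.univ.filter fun j : Fin ((p - 1) + q) => sgnP (p - 1) j = 1)
        = Finset.univ.filter fun j : Fin ((p - 1) + q) => (j : ℕ) < p - 1 := by
      ext j
      simp only [Finset.mem_filter, Finset.mem_univ, true_and]
      by_cases h : (j : ℕ) < p - 1 <;> norm_num [sgnP, h]
    rw [hset, card_filter_lt (by omega)]
  have hcard1 : Fintype.card {j : Fin ((p - 1) + q) // w' j = 1}
      = Fintype.card {j : Fin ((p - 1) + q) // sgnP (p - 1) j = 1} := by
    rw [Fintype.card_subtype, Fintype.card_subtype, ← hk, hkp, hkd]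
  have hcard2 : Fintype.card {j : Fin ((p - 1) + q) // ¬ w' j = 1}
      = Fintype.card {j : Fin ((p - 1) + q) // ¬ sgnP (p - 1) j = 1} := by
    rw [Fintype.card_subtype_compl, Fintype.card_subtype_compl, hcard1]
  set τ : Fin ((p - 1) + q) ≃ Fin ((p - 1) + q) :=
    (Equiv.sumCompl (fun j => w' j = 1)).symm.trans
      (((Fintype.equivOfCardEq hcard1).sumCongr (Fintype.equivOfCardEq hcard2)).trans
        (Equiv.sumCompl (fun j => sgnP (p - 1) j = 1))) with hτdef
  have hτ : ∀ j, sgnP (p - 1) (τ j) = w' j := by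
    intro j
    by_cases h : w' j = 1
    · have h1 : (Equiv.sumCompl (fun j => w' j = 1)).symm j = Sum.inl ⟨j, h⟩ :=
        Equiv.sumCompl_symm_apply_of_pos (p := fun j => w' j = 1) (a := j) h
      have h2 : τ j = ((Fintype.equivOfCardEq hcard1) ⟨j, h⟩ : Fin ((p - 1) + q)) := by
        rw [hτdef]
        simp [h1]
      rw [h2, h, ((Fintype.equivOfCardEq hcard1) ⟨j, h⟩).2]
    · have h1 : (Equiv.sumCompl (fun j => w' j = 1)).symm j = Sum.inr ⟨j, h⟩ :=
        Equiv.sumCompl_symm_apply_of_neg (p := fun j => w' j = 1) (a := j) h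
      have h2 : τ j = ((Fintype.equivOfCardEq hcard2) ⟨j, h⟩ : Fin ((p - 1) + q)) := by
        rw [hτdef]
        simp [h1]
      have h3 : ¬ sgnP (p - 1) (τ j) = 1 := by
        rw [h2]; exact ((Fintype.equivOfCardEq hcard2) ⟨j, h⟩).2
      rcases sgnP_cases (p - 1) (τ j) with h4 | h4
      · exact absurd h4 h3
      · rcases hw'pm j with h5 | h5
        · exact absurd h5 h
        · rw [h4, h5]
  -- finally, the isometry
  refine ⟨(LinearEquiv.funCongrLeft ℝ ℝ τ).trans g'.symm, fun x => ?_⟩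
  rw [Qpq_eq, Qpq_eq]
  have happ : ((LinearEquiv.funCongrLeft ℝ ℝ τ).trans g'.symm) x
      = g'.symm (fun j => x (τ j)) := rfl
  rw [happ]
  have h6 := hg' (g'.symm (fun j => x (τ j)))
  rw [LinearEquiv.apply_symm_apply] at h6
  rw [← h6]
  rw [← Equiv.sum_comp τ (fun i => sgnP (p - 1) i * x i ^ 2)]
  exact Finset.sum_congr rfl fun j _ => by rw [hτ j]


set_option maxHeartbeats 2000000 in
theorem OpqStabilizer_mulEquiv (p q : ℕ) (hp : 1 ≤ p) (v : Fin (p + q) → ℝ)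
    (hv : Qpq p q v = 1) :
    Nonempty ((OpqStabilizer p q v) ≃* OpqGroup (p - 1) q) := by
  classical
  obtain ⟨e, he⟩ := exists_e p q hp v hv
  have hvv : BvL p q v v = 1 := BvL_self p q v hv
  have hWz : ∀ z : ↥(LinearMap.ker (BvL p q v)), BvL p q v (z : Fin (p + q) → ℝ) = 0 := fun z => z.2
  have hmemW : ∀ x, x - BvL p q v x • v ∈ LinearMap.ker (BvL p q v) := fun x => by
    rw [LinearMap.mem_ker, map_sub, map_smul, smul_eq_mul, hvv, mul_one, sub_self]
  -- restriction of a stabilizer element to W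
  have hLW : ∀ (L : (Fin (p + q) → ℝ) →ₗ[ℝ] (Fin (p + q) → ℝ)),
      (∀ x y, BvL p q (L x) (L y) = BvL p q x y) → L v = v →
      ∀ z : ↥(LinearMap.ker (BvL p q v)), L (z : Fin (p + q) → ℝ) ∈ LinearMap.ker (BvL p q v) := by
    intro L hB hLv z
    have hcalc : BvL p q v (L (z : Fin (p + q) → ℝ)) = 0 :=
      calc BvL p q v (L z) = BvL p q (L v) (L z) := by rw [hLv]
        _ = BvL p q v (z : Fin (p + q) → ℝ) := hB v z
        _ = 0 := hWz z
    exact LinearMap.mem_ker.mpr hcalc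
  let rM : ∀ (L : (Fin (p + q) → ℝ) →ₗ[ℝ] (Fin (p + q) → ℝ)),
      (∀ z : ↥(LinearMap.ker (BvL p q v)), L (z : Fin (p + q) → ℝ) ∈ LinearMap.ker (BvL p q v)) →
      ((Fin ((p - 1) + q) → ℝ) →ₗ[ℝ] (Fin ((p - 1) + q) → ℝ)) := fun L hL =>
    e.symm.toLinearMap ∘ₗ ((L ∘ₗ (LinearMap.ker (BvL p q v)).subtype ∘ₗ e.toLinearMap).codRestrict (LinearMap.ker (BvL p q v)) (fun x => hL (e x)))
  have hrM : ∀ L hL x, ((e (rM L hL x) : Fin (p + q) → ℝ)) = L ((e x : Fin (p + q) → ℝ)) := by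
    intro L hL x
    have h1 : rM L hL x = e.symm ⟨L ((e x : Fin (p + q) → ℝ)), hL (e x)⟩ := rfl
    rw [h1, LinearEquiv.apply_symm_apply]
  -- uniqueness of extensions
  have hext : ∀ (L M : (Fin (p + q) → ℝ) →ₗ[ℝ] (Fin (p + q) → ℝ)), L v = v → M v = v →
      (∀ z : ↥(LinearMap.ker (BvL p q v)), L (z : Fin (p + q) → ℝ) = M (z : Fin (p + q) → ℝ)) → L = M := by
    intro L M hLv hMv hzs
    apply LinearMap.ext; intro x
    have hx : x = BvL p q v x • v + (x - BvL p q v x • v) := by abel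
    have h1 : L x = BvL p q v x • v + L (x - BvL p q v x • v) := by
      conv_lhs => rw [hx]
      rw [map_add, map_smul, hLv]
    have h2 : M x = BvL p q v x • v + M (x - BvL p q v x • v) := by
      conv_lhs => rw [hx]
      rw [map_add, map_smul, hMv]
    rw [h1, h2, hzs ⟨_, hmemW x⟩]
  -- data extracted from a stabilizer element
  have pf : ∀ (T : ↥(OpqStabilizer p q v)) (z : ↥(LinearMap.ker (BvL p q v))),
      (((T : ↥(OpqGroup p q)) : (Fin (p + q) → ℝ) ≃ₗ[ℝ] (Fin (p + q) → ℝ)).toLinearMap)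
        (z : Fin (p + q) → ℝ) ∈ LinearMap.ker (BvL p q v) := by
    intro T
    refine hLW _ (B_invariant p q _ (fun x => T.1.2 x)) T.2
  let mk : ↥(OpqStabilizer p q v) → ((Fin ((p - 1) + q) → ℝ) →ₗ[ℝ] (Fin ((p - 1) + q) → ℝ)) :=
    fun T => rM _ (pf T)
  have hmk : ∀ T x, ((e (mk T x) : Fin (p + q) → ℝ))
      = ((T : ↥(OpqGroup p q)) : (Fin (p + q) → ℝ) ≃ₗ[ℝ] (Fin (p + q) → ℝ))
        ((e x : Fin (p + q) → ℝ)) := fun T x => hrM _ _ x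
  have hcomp : ∀ T S x, mk T (mk S x) = mk (T * S) x := by
    intro T S x
    apply e.injective
    apply Subtype.ext
    rw [hmk, hmk, hmk]
    rfl
  have hone : ∀ x, mk 1 x = x := by
    intro x
    apply e.injective
    apply Subtype.ext
    rw [hmk]
    rfl
  -- the forward group homomorphism
  have hΦmem : ∀ T, ∀ x, Qpq (p - 1) q (mk T x) = Qpq (p - 1) q x := by
    intro T x
    calc Qpq (p - 1) q (mk T x)
        = Qpq p q ((e (mk T x) : Fin (p + q) → ℝ)) := (he _).symm
      _ = Qpq p q (((T : ↥(OpqGroup p q)) : (Fin (p + q) → ℝ) ≃ₗ[ℝ] (Fin (p + q) → ℝ))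
            ((e x : Fin (p + q) → ℝ))) := by rw [hmk T x]
      _ = Qpq p q ((e x : Fin (p + q) → ℝ)) := T.1.2 _
      _ = Qpq (p - 1) q x := he x
  let Φ0 : ↥(OpqStabilizer p q v) → ((Fin ((p - 1) + q) → ℝ) ≃ₗ[ℝ] (Fin ((p - 1) + q) → ℝ)) :=
    fun T => LinearEquiv.ofLinear (mk T) (mk T⁻¹)
      (LinearMap.ext fun x => by
        show mk T (mk T⁻¹ x) = x
        rw [hcomp, mul_inv_cancel, hone])
      (LinearMap.ext fun x => by
        show mk T⁻¹ (mk T x) = x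
        rw [hcomp, inv_mul_cancel, hone])
  have hΦ0app : ∀ T x, Φ0 T x = mk T x := fun T x => rfl
  let Φ : ↥(OpqStabilizer p q v) →* ↥(OpqGroup (p - 1) q) :=
    { toFun := fun T => ⟨Φ0 T, fun x => hΦmem T x⟩
      map_one' := by
        apply Subtype.ext
        apply LinearEquiv.ext
        intro x
        show mk 1 x = x
        exact hone x
      map_mul' := by
        intro T S
        apply Subtype.ext
        apply LinearEquiv.ext
        intro x
        show mk (T * S) x = mk T (mk S x)
        rw [hcomp] }
  have hinj : Function.Injective Φ := by
    intro T S hTS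
    have hTS' : ∀ x, mk T x = mk S x := by
      intro x
      have := congrArg (fun U => ((U : ↥(OpqGroup (p - 1) q)) :
        (Fin ((p - 1) + q) → ℝ) ≃ₗ[ℝ] (Fin ((p - 1) + q) → ℝ)) x) hTS
      exact this
    apply Subtype.ext
    apply Subtype.ext
    apply LinearEquiv.toLinearMap_injective
    refine hext _ _ T.2 S.2 fun z => ?_
    have h1 : ((T : ↥(OpqGroup p q)) : (Fin (p + q) → ℝ) ≃ₗ[ℝ] (Fin (p + q) → ℝ))
        (z : Fin (p + q) → ℝ) = ((e (mk T (e.symm z)) : Fin (p + q) → ℝ)) := by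
      rw [hmk, LinearEquiv.apply_symm_apply]
    have h2 : ((S : ↥(OpqGroup p q)) : (Fin (p + q) → ℝ) ≃ₗ[ℝ] (Fin (p + q) → ℝ))
        (z : Fin (p + q) → ℝ) = ((e (mk S (e.symm z)) : Fin (p + q) → ℝ)) := by
      rw [hmk, LinearEquiv.apply_symm_apply]
    refine h1.trans ?_
    rw [hTS' (e.symm z)]
    exact h2.symm
  -- surjectivity
  have hsurj : Function.Surjective Φ := by
    intro U
    set prWc : (Fin (p + q) → ℝ) →ₗ[ℝ] ↥(LinearMap.ker (BvL p q v)) :=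
      (LinearMap.id - (BvL p q v).smulRight v).codRestrict (LinearMap.ker (BvL p q v)) (fun x => by simpa using hmemW x)
      with hprWcdef
    have hprWc : ∀ x, ((prWc x : Fin (p + q) → ℝ)) = x - BvL p q v x • v := fun x => rfl
    let Ψlin : ((Fin ((p - 1) + q) → ℝ) →ₗ[ℝ] (Fin ((p - 1) + q) → ℝ)) →
        ((Fin (p + q) → ℝ) →ₗ[ℝ] (Fin (p + q) → ℝ)) := fun M =>
      (BvL p q v).smulRight v + (LinearMap.ker (BvL p q v)).subtype ∘ₗ e.toLinearMap ∘ₗ M ∘ₗ e.symm.toLinearMap ∘ₗ prWc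
    have hΨapp : ∀ M x, Ψlin M x
        = BvL p q v x • v + ((e (M (e.symm (prWc x))) : Fin (p + q) → ℝ)) := fun M x => rfl
    have hΨB : ∀ M x, BvL p q v (Ψlin M x) = BvL p q v x := by
      intro M x
      rw [hΨapp, map_add, map_smul, smul_eq_mul, hvv, mul_one, hWz (e _), add_zero]
    have hΨpr : ∀ M x, prWc (Ψlin M x) = e (M (e.symm (prWc x))) := by
      intro M x
      apply Subtype.ext
      rw [hprWc, hΨB, hΨapp]
      abel
    have hΨcomp : ∀ M M' x, Ψlin M (Ψlin M' x)
        = BvL p q v x • v + ((e (M (M' (e.symm (prWc x)))) : Fin (p + q) → ℝ)) := by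
      intro M M' x
      rw [hΨapp, hΨB, hΨpr, LinearEquiv.symm_apply_apply]
    have hid1 : ∀ x, Ψlin U.1.toLinearMap (Ψlin U.1.symm.toLinearMap x) = x := by
      intro x
      rw [hΨcomp]
      have h3 : U.1.toLinearMap (U.1.symm.toLinearMap (e.symm (prWc x))) = e.symm (prWc x) :=
        U.1.apply_symm_apply _
      rw [h3, LinearEquiv.apply_symm_apply, hprWc]
      abel
    have hid2 : ∀ x, Ψlin U.1.symm.toLinearMap (Ψlin U.1.toLinearMap x) = x := by
      intro x
      rw [hΨcomp]
      have h3 : U.1.symm.toLinearMap (U.1.toLinearMap (e.symm (prWc x))) = e.symm (prWc x) :=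
        U.1.symm_apply_apply _
      rw [h3, LinearEquiv.apply_symm_apply, hprWc]
      abel
    set ΨU : (Fin (p + q) → ℝ) ≃ₗ[ℝ] (Fin (p + q) → ℝ) :=
      LinearEquiv.ofLinear (Ψlin U.1.toLinearMap) (Ψlin U.1.symm.toLinearMap)
        (LinearMap.ext hid1) (LinearMap.ext hid2) with hΨUdef
    have hΨUapp : ∀ x, ΨU x = Ψlin U.1.toLinearMap x := fun x => rfl
    have hmemO : ∀ x, Qpq p q (ΨU x) = Qpq p q x := by
      intro x
      rw [hΨUapp, hΨapp]
      have h1 : BvL p q v ((e (U.1.toLinearMap (e.symm (prWc x))) : Fin (p + q) → ℝ)) = 0 :=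
        hWz _
      rw [Qpq_smul_add p q v hv _ _ h1, he (U.1.toLinearMap (e.symm (prWc x)))]
      have h2 : Qpq (p - 1) q (U.1.toLinearMap (e.symm (prWc x)))
          = Qpq (p - 1) q (e.symm (prWc x)) := U.2 _
      rw [h2, ← he (e.symm (prWc x)), LinearEquiv.apply_symm_apply, hprWc]
      exact (Qpq_decomp p q v hv x).symm
    have hstab : ΨU v = v := by
      rw [hΨUapp, hΨapp]
      have h1 : prWc v = 0 := by
        apply Subtype.ext
        rw [hprWc, hvv, one_smul, sub_self]
        rfl
      rw [h1, map_zero, map_zero, map_zero]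
      show BvL p q v v • v + (0 : Fin (p + q) → ℝ) = v
      rw [hvv, one_smul, add_zero]
    refine ⟨⟨⟨ΨU, hmemO⟩, hstab⟩, ?_⟩
    apply Subtype.ext
    apply LinearEquiv.ext
    intro x
    show mk ⟨⟨ΨU, hmemO⟩, hstab⟩ x = U.1 x
    apply e.injective
    apply Subtype.ext
    rw [hmk]
    show ΨU ((e x : Fin (p + q) → ℝ)) = ((e (U.1 x) : Fin (p + q) → ℝ))
    rw [hΨUapp, hΨapp]
    have h1 : prWc ((e x : Fin (p + q) → ℝ)) = e x := by
      apply Subtype.ext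
      rw [hprWc, hWz (e x), zero_smul, sub_zero]
    rw [h1, LinearEquiv.symm_apply_apply, hWz (e x), zero_smul, zero_add]
    rfl
  exact ⟨MulEquiv.ofBijective Φ ⟨hinj, hsurj⟩⟩
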